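/- Every orbit O of the permutation g satisfies |O| ≥ (n+1)/λ − δ, where λ = gcd(p',q') and δ = 1 if q'-1 ∈ O, δ = 0 otherwise. -/
import Mathlib


def g (p' q' i : ℕ) : ℕ :=
  if i + 1 < q' then i + p' else if i + 1 = q' then p' - 1 else i - q'

lemma gL1 (p' q' n b : ℕ) (hp : 1 ≤ p') (hq : 1 ≤ q') (hn : p' + q' - 1 = n)
    (hb : b < n) (h : (b + p') % (n + 1) ≠ n) : g p' q' b = (b + p') % (n + 1) := by
  unfold g
  split_ifs with h1 h2
  · rw [Nat.mod_eq_of_lt (by omega)]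
  · exfalso; apply h; rw [Nat.mod_eq_of_lt (by omega)]; omega
  · have hb' : b + p' = (b - q') + (n + 1) := by omega
    rw [hb', Nat.add_mod_right, Nat.mod_eq_of_lt (by omega)]

lemma gL2 (p' q' n b : ℕ) (hp : 1 ≤ p') (hq : 1 ≤ q') (hn : p' + q' - 1 = n)
    (hb : b < n) (h : (b + p') % (n + 1) = n) :
    b = q' - 1 ∧ g p' q' b = (b + 2 * p') % (n + 1) := by
  have hp'le : p' ≤ n := by omega
  have hbp : b + p' = n := by
    rcases Nat.lt_or_ge (b + p') (n + 1) with hlt | hge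
    · rw [Nat.mod_eq_of_lt hlt] at h; exact h
    · rw [Nat.mod_eq_sub_mod hge, Nat.mod_eq_of_lt (by omega)] at h; omega
  have hbq : b = q' - 1 := by omega
  refine ⟨hbq, ?_⟩
  have h2 : b + 2 * p' = (p' - 1) + (n + 1) := by omega
  rw [h2, Nat.add_mod_right, Nat.mod_eq_of_lt (by omega)]
  unfold g
  split_ifs with h1 h2
  · omega
  · rfl
  · omega

open Classical in
theorem stmt_5 (p' q' n : ℕ) (hp : 1 ≤ p') (hq : 1 ≤ q') (hn : p' + q' - 1 = n)
    (l : ℕ) (hl : l = Nat.gcd p' q') (i : ℕ) (hi : i < n)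
    (O : Set ℕ) (hO : O = {j | j < n ∧ ∃ k : ℕ, (g p' q')^[k] i = j}) :
    O.ncard ≥ (n + 1) / l - (if q' - 1 ∈ O then 1 else 0) := by
  have hn1 : 1 ≤ n := by omega
  have hp'le : p' ≤ n := by omega
  have hq'le : q' ≤ n := by omega
  have hin : i % (n + 1) = i := Nat.mod_eq_of_lt (by omega)
  have hfn : ∀ m : ℕ, (i + m * p') % (n + 1) < n + 1 := fun m => Nat.mod_lt _ (by omega)
  have fstep : ∀ a j : ℕ, ((i + a * p') % (n + 1) + j * p') % (n + 1)
      = (i + (a + j) * p') % (n + 1) := by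
    intro a j
    rw [Nat.mod_add_mod]
    congr 1
    ring
  have hnp : (n + p') % (n + 1) = p' - 1 := by
    have h2 : n + p' = (p' - 1) + (n + 1) := by omega
    rw [h2, Nat.add_mod_right]
    exact Nat.mod_eq_of_lt (by omega)
  -- key surjectivity lemma
  have key : ∀ m : ℕ, (i + m * p') % (n + 1) ≠ n →
      ∃ k : ℕ, (g p' q')^[k] i = (i + m * p') % (n + 1) := by
    intro m
    induction m using Nat.strong_induction_on with
    | _ m ih =>
      intro hne
      match m with
      | 0 =>
        refine ⟨0, ?_⟩
        simp only [Function.iterate_zero, id_eq]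
        rw [Nat.zero_mul, Nat.add_zero, hin]
      | (m₀ + 1) =>
        by_cases hv : (i + m₀ * p') % (n + 1) = n
        · -- need two steps back
          match m₀ with
          | 0 =>
            exfalso
            rw [Nat.zero_mul, Nat.add_zero, hin] at hv
            omega
          | (m₁ + 1) =>
            have hv1 : (i + m₁ * p') % (n + 1) ≠ n := by
              intro hv1
              have h3 : (i + (m₁ + 1) * p') % (n + 1)
                  = ((i + m₁ * p') % (n + 1) + 1 * p') % (n + 1) := (fstep m₁ 1).symm
              rw [hv1, one_mul, hnp] at h3
              omega
            obtain ⟨k, hk⟩ := ih m₁ (by omega) hv1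
            have hblt : (i + m₁ * p') % (n + 1) < n := by
              have := hfn m₁; omega
            have hstep : ((i + m₁ * p') % (n + 1) + p') % (n + 1) = n := by
              have := fstep m₁ 1
              rw [one_mul] at this
              rw [this]; exact hv
            obtain ⟨-, hg⟩ := gL2 p' q' n _ hp hq hn hblt hstep
            refine ⟨k + 1, ?_⟩
            rw [Function.iterate_succ_apply', hk, hg]
            exact fstep m₁ 2
        · obtain ⟨k, hk⟩ := ih m₀ (by omega) hv
          have hblt : (i + m₀ * p') % (n + 1) < n := by
            have := hfn m₀; omega
          have harg : ((i + m₀ * p') % (n + 1) + p') % (n + 1)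
              = (i + (m₀ + 1) * p') % (n + 1) := by
            have := fstep m₀ 1
            rw [one_mul] at this
            exact this
          have hne' : ((i + m₀ * p') % (n + 1) + p') % (n + 1) ≠ n := by
            rw [harg]; exact hne
          refine ⟨k + 1, ?_⟩
          rw [Function.iterate_succ_apply', hk,
            gL1 p' q' n _ hp hq hn hblt hne', harg]
  have mem : ∀ m : ℕ, (i + m * p') % (n + 1) ≠ n → (i + m * p') % (n + 1) ∈ O := by
    intro m hm
    obtain ⟨k, hk⟩ := key m hm
    rw [hO]
    exact ⟨by have := hfn m; omega, k, hk⟩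
  -- if q'-1 ∉ O then n is never hit
  have hC : q' - 1 ∉ O → ∀ m : ℕ, (i + m * p') % (n + 1) ≠ n := by
    intro hno m hm
    apply hno
    match m with
    | 0 =>
      rw [Nat.zero_mul, Nat.add_zero, hin] at hm
      omega
    | (m₀ + 1) =>
      have hv1 : (i + m₀ * p') % (n + 1) ≠ n := by
        intro hv1
        have h3 : (i + (m₀ + 1) * p') % (n + 1)
            = ((i + m₀ * p') % (n + 1) + 1 * p') % (n + 1) := (fstep m₀ 1).symm
        rw [hv1, one_mul, hnp] at h3
        omega
      obtain ⟨k, hk⟩ := key m₀ hv1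
      have hblt : (i + m₀ * p') % (n + 1) < n := by have := hfn m₀; omega
      have hstep : ((i + m₀ * p') % (n + 1) + p') % (n + 1) = n := by
        have := fstep m₀ 1
        rw [one_mul] at this
        rw [this]; exact hm
      obtain ⟨hbq, -⟩ := gL2 p' q' n _ hp hq hn hblt hstep
      rw [hO]
      exact ⟨by omega, k, by rw [hk, hbq]⟩
  -- arithmetic facts about l
  have hl0 : 0 < l := by rw [hl]; exact Nat.gcd_pos_of_pos_left _ hp
  have hldvd : l ∣ n + 1 := by
    have : n + 1 = p' + q' := by omega
    rw [this, hl]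
    exact Nat.dvd_add (Nat.gcd_dvd_left _ _) (Nat.gcd_dvd_right _ _)
  have hgcdM : Nat.gcd (n + 1) p' = l := by
    have h1 : n + 1 = q' + p' := by omega
    rw [h1, Nat.gcd_add_self_left, Nat.gcd_comm, hl]
  -- injectivity
  have hinj0 : ∀ a b : ℕ, a ≤ b → b < (n + 1) / l →
      (i + a * p') % (n + 1) = (i + b * p') % (n + 1) → a = b := by
    intro a b hab hbd h
    have h2 : Nat.ModEq (n + 1) (a * p') (b * p') := Nat.ModEq.add_left_cancel' i h
    have h3 : (n + 1) ∣ b * p' - a * p' :=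
      (Nat.modEq_iff_dvd' (Nat.mul_le_mul_right _ hab)).1 h2
    rw [← Nat.sub_mul] at h3
    have hMl : n + 1 = l * ((n + 1) / l) := (Nat.mul_div_cancel' hldvd).symm
    have hpl : p' = l * (p' / l) := by
      rw [hl]; exact (Nat.mul_div_cancel' (Nat.gcd_dvd_left _ _)).symm
    have h4 : l * ((n + 1) / l) ∣ l * ((b - a) * (p' / l)) := by
      rw [← hMl]
      have heq : l * ((b - a) * (p' / l)) = (b - a) * (l * (p' / l)) := by ring
      rw [heq, ← hpl]
      exact h3
    have h5 : (n + 1) / l ∣ (b - a) * (p' / l) :=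
      (Nat.mul_dvd_mul_iff_left hl0).1 h4
    have hcop : Nat.Coprime ((n + 1) / l) (p' / l) := by
      have := Nat.coprime_div_gcd_div_gcd (m := n + 1) (n := p') (by rw [hgcdM]; exact hl0)
      rwa [hgcdM] at this
    have h6 : (n + 1) / l ∣ b - a := hcop.dvd_of_dvd_mul_right h5
    have h7 : b - a < (n + 1) / l := by omega
    have h8 : b - a = 0 := Nat.eq_zero_of_dvd_of_lt h6 h7
    omega
  have hinj : Set.InjOn (fun m => (i + m * p') % (n + 1))
      ↑(Finset.range ((n + 1) / l)) := by
    intro a ha b hb h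
    simp only [Finset.coe_range, Set.mem_Iio] at ha hb
    rcases le_total a b with hab | hab
    · exact hinj0 a b hab hb h
    · exact (hinj0 b a hab ha h.symm).symm
  set T : Finset ℕ := (Finset.range ((n + 1) / l)).image (fun m => (i + m * p') % (n + 1))
    with hT
  have hTcard : T.card = (n + 1) / l := by
    rw [hT, Finset.card_image_of_injOn hinj, Finset.card_range]
  have hOfin : O.Finite := by
    apply (Set.finite_Iio n).subset
    rw [hO]; intro x hx; exact hx.1
  by_cases hmem : q' - 1 ∈ O
  · simp only [hmem, if_pos]
    have hsub : ↑(T.erase n) ⊆ O := by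
      intro x hx
      simp only [Finset.coe_erase, Set.mem_diff, Set.mem_singleton_iff, Finset.mem_coe,
        hT, Finset.mem_image, Finset.mem_range] at hx
      obtain ⟨⟨m, hm, hfm⟩, hxn⟩ := hx
      rw [← hfm]
      exact mem m (by rw [hfm]; exact hxn)
    have h1 : (T.erase n).card ≤ O.ncard := by
      rw [← Set.ncard_coe_finset]
      exact Set.ncard_le_ncard hsub hOfin
    have h2 : T.card - 1 ≤ (T.erase n).card := Finset.pred_card_le_card_erase
    omega
  · simp only [hmem, if_neg, not_false_iff]
    have hsub : ↑T ⊆ O := by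
      intro x hx
      simp only [hT, Finset.coe_image, Finset.coe_range, Set.mem_image, Set.mem_Iio] at hx
      obtain ⟨m, hm, hfm⟩ := hx
      rw [← hfm]
      exact mem m (hC hmem m)
    have h1 : T.card ≤ O.ncard := by
      rw [← Set.ncard_coe_finset]
      exact Set.ncard_le_ncard hsub hOfin
    omega
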